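/- arXiv:2008.12235 — 9 statements merged into one kernel-verified Lean document; each statement's English description precedes it below -/
import Mathlib

section
/- In the facility-choice game with zero facility costs, any assignment ŝ minimizing the exact potential Φ̃ is a Nash equilibrium, and its social cost satisfies c(ŝ) ≤ 2·c(s*) where s* minimizes social cost. Hence the Price of Stability is at most 2. -/
open Finset
open scoped Classical

variable {A F : Type*}

/-- Agents `i` and `j` are connected in assignment `s` if they use a common facility.
(Two agents both at `none` are *not* connected, per the paper's convention.) -/
def conn (s : A → Option F) (i j : A) : Prop :=
  ∃ f, s i = some f ∧ s j = some f

/-- Agent `i`'s cost without facility prices: connection cost plus disconnection costs. -/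
noncomputable def ct [Fintype A] (cc : A → Option F → ℝ) (dc : A → A → ℝ)
    (s : A → Option F) (i : A) : ℝ :=
  cc i (s i) + ∑ j ∈ Finset.univ.filter (fun j => j ≠ i ∧ ¬ conn s i j), dc i j

/-- The potential function Φ̃: total connection cost plus disconnection cost of each
unordered disconnected pair counted once (hence the factor 1/2 on the double sum). -/
noncomputable def Phi0 [Fintype A] (cc : A → Option F → ℝ) (dc : A → A → ℝ)
    (s : A → Option F) : ℝ :=
  (∑ i, cc i (s i))
    + (1 / 2) * ∑ i, ∑ j ∈ Finset.univ.filter (fun j => j ≠ i ∧ ¬ conn s i j), dc i j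

/-- Social cost with zero facility costs: each disconnected pair is counted twice. -/
noncomputable def soc [Fintype A] (cc : A → Option F → ℝ) (dc : A → A → ℝ)
    (s : A → Option F) : ℝ :=
  (∑ i, cc i (s i))
    + ∑ i, ∑ j ∈ Finset.univ.filter (fun j => j ≠ i ∧ ¬ conn s i j), dc i j

lemma conn_symm {s : A → Option F} {i j : A} : conn s i j ↔ conn s j i := by
  unfold conn; tauto

noncomputable def gfun (dc : A → A → ℝ) (s : A → Option F) (j k : A) : ℝ :=
  if k ≠ j ∧ ¬ conn s j k then dc j k else 0

lemma g_symm (dc : A → A → ℝ) (hsym : ∀ i j, dc i j = dc j i)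
    (s : A → Option F) (j k : A) : gfun dc s j k = gfun dc s k j := by
  unfold gfun
  by_cases h : k ≠ j ∧ ¬ conn s j k
  · rw [if_pos h, if_pos ⟨h.1.symm, fun hc => h.2 (conn_symm.mp hc)⟩, hsym]
  · rw [if_neg h, if_neg (fun hc => h ⟨hc.1.symm, fun hcc => hc.2 (conn_symm.mp hcc)⟩)]

lemma g_self (dc : A → A → ℝ) (s : A → Option F) (j : A) : gfun dc s j j = 0 := by
  simp [gfun]

lemma g_nonneg (dc : A → A → ℝ) (hdc : ∀ i j, 0 ≤ dc i j)
    (s : A → Option F) (j k : A) : 0 ≤ gfun dc s j k := by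
  unfold gfun; split_ifs
  · exact hdc j k
  · exact le_refl 0

lemma g_update [DecidableEq A] (dc : A → A → ℝ) (s : A → Option F) (i : A) (f : Option F)
    {j k : A} (hj : j ≠ i) (hk : k ≠ i) :
    gfun dc (Function.update s i f) j k = gfun dc s j k := by
  simp [gfun, conn, Function.update_of_ne hj, Function.update_of_ne hk]

lemma row_eq [Fintype A] (dc : A → A → ℝ) (s : A → Option F) (i : A) :
    ∑ j ∈ Finset.univ.filter (fun j => j ≠ i ∧ ¬ conn s i j), dc i j
      = ∑ j, gfun dc s i j := by
  rw [Finset.sum_filter]; rfl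

lemma Dsum_decomp [Fintype A] [DecidableEq A] (dc : A → A → ℝ)
    (hsym : ∀ i j, dc i j = dc j i) (s : A → Option F) (i : A) :
    ∑ j, ∑ k, gfun dc s j k
      = 2 * ∑ k, gfun dc s i k
        + ∑ j ∈ Finset.univ.erase i, ∑ k ∈ Finset.univ.erase i, gfun dc s j k := by
  have h1 : ∀ (h : A → ℝ), ∑ j, h j = h i + ∑ j ∈ Finset.univ.erase i, h j := by
    intro h
    rw [Finset.add_sum_erase _ h (Finset.mem_univ i)]
  rw [h1 (fun j => ∑ k, gfun dc s j k)]
  have h2 : ∑ j ∈ Finset.univ.erase i, ∑ k, gfun dc s j k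
      = ∑ j ∈ Finset.univ.erase i,
          (gfun dc s j i + ∑ k ∈ Finset.univ.erase i, gfun dc s j k) := by
    apply Finset.sum_congr rfl; intro j _; exact h1 _
  rw [h2, Finset.sum_add_distrib]
  have h3 : ∑ j ∈ Finset.univ.erase i, gfun dc s j i
      = ∑ j ∈ Finset.univ.erase i, gfun dc s i j := by
    apply Finset.sum_congr rfl; intro j _; exact g_symm dc hsym s j i
  have h4 : ∑ k, gfun dc s i k = ∑ j ∈ Finset.univ.erase i, gfun dc s i j := by
    rw [h1 (fun k => gfun dc s i k), g_self, zero_add]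
  rw [h3, ← h4]; ring

lemma D_nonneg [Fintype A] (dc : A → A → ℝ) (hdc : ∀ i j, 0 ≤ dc i j)
    (t : A → Option F) :
    0 ≤ ∑ i, ∑ j ∈ Finset.univ.filter (fun j => j ≠ i ∧ ¬ conn t i j), dc i j :=
  Finset.sum_nonneg fun j _ => Finset.sum_nonneg fun k _ => hdc j k

lemma soc_phi_bounds [Fintype A] (cc : A → Option F → ℝ) (dc : A → A → ℝ)
    (hcc : ∀ i o, 0 ≤ cc i o) (hdc : ∀ i j, 0 ≤ dc i j) (t : A → Option F) :
    Phi0 cc dc t ≤ soc cc dc t ∧ soc cc dc t ≤ 2 * Phi0 cc dc t := by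
  have h1 : 0 ≤ ∑ i, cc i (t i) := Finset.sum_nonneg fun j _ => hcc j (t j)
  have h2 := D_nonneg dc hdc t
  unfold Phi0 soc
  constructor <;> linarith

lemma phi_diff [Fintype A] [DecidableEq A] (cc : A → Option F → ℝ) (dc : A → A → ℝ)
    (hsym : ∀ i j, dc i j = dc j i) (s : A → Option F) (i : A) (f : Option F) :
    Phi0 cc dc (Function.update s i f) - Phi0 cc dc s
      = ct cc dc (Function.update s i f) i - ct cc dc s i := by
  set s' := Function.update s i f with hs'
  have hPhi : ∀ t : A → Option F, Phi0 cc dc t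
      = (∑ j, cc j (t j)) + (1/2) * ∑ j, ∑ k, gfun dc t j k := by
    intro t; unfold Phi0; congr 1; congr 1
    apply Finset.sum_congr rfl; intro j _; exact row_eq dc t j
  have hct : ∀ t : A → Option F, ct cc dc t i = cc i (t i) + ∑ k, gfun dc t i k := by
    intro t; unfold ct; rw [row_eq]
  have hC : ∀ t : A → Option F,
      (∑ j, cc j (t j)) = cc i (t i) + ∑ j ∈ Finset.univ.erase i, cc j (t j) :=
    fun t => (Finset.add_sum_erase _ _ (Finset.mem_univ i)).symm
  have hCrest : ∑ j ∈ Finset.univ.erase i, cc j (s' j)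
      = ∑ j ∈ Finset.univ.erase i, cc j (s j) := by
    apply Finset.sum_congr rfl; intro j hj
    rw [hs', Function.update_of_ne (Finset.ne_of_mem_erase hj)]
  have hR : ∑ j ∈ Finset.univ.erase i, ∑ k ∈ Finset.univ.erase i, gfun dc s' j k
      = ∑ j ∈ Finset.univ.erase i, ∑ k ∈ Finset.univ.erase i, gfun dc s j k := by
    apply Finset.sum_congr rfl; intro j hj
    apply Finset.sum_congr rfl; intro k hk
    exact g_update dc s i f (Finset.ne_of_mem_erase hj) (Finset.ne_of_mem_erase hk)
  rw [hPhi s', hPhi s, hct s', hct s, Dsum_decomp dc hsym s' i, Dsum_decomp dc hsym s i,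
    hC s', hC s, hCrest, hR]
  ring

/-- any minimizer of the potential Φ̃ is a Nash equilibrium, and its social
cost is at most twice the minimum social cost; hence the Price of Stability is at most 2. -/
theorem pos_le_two [Fintype A] [DecidableEq A]
    (cc : A → Option F → ℝ) (dc : A → A → ℝ)
    (hcc0 : ∀ i, cc i none = 0) (hcc : ∀ i o, 0 ≤ cc i o)
    (hdc : ∀ i j, 0 ≤ dc i j) (hsym : ∀ i j, dc i j = dc j i)
    (shat : A → Option F) (hhat : ∀ s, Phi0 cc dc shat ≤ Phi0 cc dc s)
    (sstar : A → Option F) (hstar : ∀ s, soc cc dc sstar ≤ soc cc dc s) :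
    (∀ i s', ct cc dc shat i ≤ ct cc dc (Function.update shat i s') i) ∧
      soc cc dc shat ≤ 2 * soc cc dc sstar := by
  constructor
  · intro i s'
    have h := hhat (Function.update shat i s')
    have hd := phi_diff cc dc hsym shat i s'
    linarith
  · have h3 := hhat sstar
    have b1 := soc_phi_bounds cc dc hcc hdc shat
    have b2 := soc_phi_bounds cc dc hcc hdc sstar
    linarith [b1.1, b1.2, b2.1, b2.2]
end

section
/- The Price of Anarchy of the facility-choice game is unbounded: there is an instance (one facility f, two agents, cc(1,f)=cc(2,f)=0, dc(1,2)=1, zero facility cost) in which the assignment where both agents choose ∅ is a Nash equilibrium with social cost 2, while the optimum (both at f) has social cost 0. -/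
open Finset
open scoped Classical

variable {A F : Type*}

/-- A Nash equilibrium: no agent can strictly decrease its own cost by deviating. -/
def IsNash [Fintype A] [DecidableEq A] (cc : A → Option F → ℝ) (dc : A → A → ℝ)
    (s : A → Option F) : Prop :=
  ∀ i s', ct cc dc s i ≤ ct cc dc (Function.update s i s') i

/-- the Price of Anarchy is unbounded.  One facility, two agents with
zero connection costs and `dc(1,2)=1`: both agents choosing ∅ is a Nash equilibrium
of social cost 2, while the optimum (both at the facility) has social cost 0. -/
theorem poa_unbounded :
    let cc : Fin 2 → Option Unit → ℝ := fun _ _ => 0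
    let dc : Fin 2 → Fin 2 → ℝ := fun _ _ => 1
    let s0 : Fin 2 → Option Unit := fun _ => none
    let sf : Fin 2 → Option Unit := fun _ => some ()
    IsNash cc dc s0 ∧ soc cc dc s0 = 2 ∧ soc cc dc sf = 0 ∧
      (∀ s, soc cc dc sf ≤ soc cc dc s) := by
  intro cc dc s0 sf
  have hdc : dc = fun _ _ => (1:ℝ) := rfl
  have hcc : cc = fun _ _ => (0:ℝ) := rfl
  have hne : ∀ i : Fin 2, i + 1 ≠ i := by decide
  have hct : ∀ (s : Fin 2 → Option Unit) (i : Fin 2),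
      ct cc dc s i = if conn s i (i + 1) then 0 else 1 := by
    intro s i
    rw [ct, Finset.sum_filter]
    fin_cases i
    · rw [Fin.sum_univ_two]
      by_cases h : conn s 0 1 <;> simp [hcc, hdc, h]
    · rw [Fin.sum_univ_two]
      by_cases h : conn s 1 0 <;> simp [hcc, hdc, h]
  have hsoc : ∀ s : Fin 2 → Option Unit,
      soc cc dc s = (if conn s 0 1 then 0 else 1) + (if conn s 1 0 then 0 else 1) := by
    intro s
    rw [soc, Fin.sum_univ_two, Fin.sum_univ_two, Finset.sum_filter, Finset.sum_filter,
      Fin.sum_univ_two, Fin.sum_univ_two]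
    by_cases h01 : conn s 0 1 <;> by_cases h10 : conn s 1 0 <;>
      simp [hcc, hdc, h01, h10] <;> aesop
  refine ⟨?_, ?_, ?_, ?_⟩
  · intro i s'
    rw [hct, hct]
    have h1 : ¬ conn s0 i (i + 1) := by rintro ⟨f, hf, -⟩; simp [s0] at hf
    have h2 : ¬ conn (Function.update s0 i s') i (i + 1) := by
      rintro ⟨f, -, hf⟩
      rw [Function.update_of_ne (hne i)] at hf
      simp [s0] at hf
    rw [if_neg h1, if_neg h2]
  · rw [hsoc]
    have : ∀ i j : Fin 2, ¬ conn s0 i j := by rintro i j ⟨f, hf, -⟩; simp [s0] at hf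
    rw [if_neg (this 0 1), if_neg (this 1 0)]; norm_num
  · rw [hsoc]
    have : ∀ i j : Fin 2, conn sf i j := fun i j => ⟨(), rfl, rfl⟩
    rw [if_pos (this 0 1), if_pos (this 1 0)]; norm_num
  · intro s
    have h0 : soc cc dc sf = 0 := by
      rw [hsoc]
      have : ∀ i j : Fin 2, conn sf i j := fun i j => ⟨(), rfl, rfl⟩
      rw [if_pos (this 0 1), if_pos (this 1 0)]; norm_num
    rw [h0, hsoc]
    split <;> split <;> norm_num
end

section
/- Potential decrease under improving moves: in an assignment s, if agent i switches to a strategy s_i' that does not use any facility closed (unused) in s, and c̃_i(s_i', s_{-i}) < c̃_i(s), then Φ(s_i', s_{-i}) < Φ(s), where Φ(s) = Σ_{open f} c(f) + Φ̃(s). -/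
open Finset
open scoped Classical

variable {A F : Type*}

/-- Total opening cost of the facilities open (used by some agent) in `s`. -/
noncomputable def fcost [Fintype F] (fc : F → ℝ) (s : A → Option F) : ℝ :=
  ∑ f ∈ Finset.univ.filter (fun f => ∃ i, s i = some f), fc f

/-- The potential Φ with facility costs: total opening cost of open facilities plus Φ̃. -/
noncomputable def PhiC [Fintype A] [Fintype F] (fc : F → ℝ) (cc : A → Option F → ℝ)
    (dc : A → A → ℝ) (s : A → Option F) : ℝ :=
  fcost fc s + Phi0 cc dc s

/-- Total social cost: facility opening costs plus connection costs plus each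
disconnected pair counted twice. -/
noncomputable def socC [Fintype A] [Fintype F] (fc : F → ℝ) (cc : A → Option F → ℝ)
    (dc : A → A → ℝ) (s : A → Option F) : ℝ :=
  fcost fc s + soc cc dc s

noncomputable def gaux (dc : A → A → ℝ) (u : A → Option F) (a b : A) : ℝ :=
  if b ≠ a ∧ ¬ conn u a b then dc a b else 0

lemma ct_eq_gaux [Fintype A] (cc : A → Option F → ℝ) (dc : A → A → ℝ)
    (u : A → Option F) (a : A) :
    ct cc dc u a = cc a (u a) + ∑ b, gaux dc u a b := by
  rw [ct, Finset.sum_filter]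
  refine congrArg _ (Finset.sum_congr rfl fun b _ => ?_)
  unfold gaux
  by_cases h : b ≠ a ∧ ¬ conn u a b
  · rw [if_pos h]
  · rw [if_neg h]

lemma Phi0_eq_gaux [Fintype A] (cc : A → Option F → ℝ) (dc : A → A → ℝ)
    (u : A → Option F) :
    Phi0 cc dc u = (∑ a, cc a (u a)) + (1 / 2) * ∑ a, ∑ b, gaux dc u a b := by
  rw [Phi0]
  congr 1
  congr 1
  refine Finset.sum_congr rfl (fun a _ => ?_)
  rw [Finset.sum_filter]
  refine Finset.sum_congr rfl fun b _ => ?_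
  unfold gaux
  by_cases h : b ≠ a ∧ ¬ conn u a b
  · rw [if_pos h]
  · rw [if_neg h]

/-- if agent `i` deviates to a strategy `s'` using no facility that is
closed in `s` and strictly decreases its cost `c̃_i`, then the potential
`Φ(s) = Σ_{open f} c(f) + Φ̃(s)` strictly decreases. -/
theorem potential_decreases [Fintype A] [Fintype F] [DecidableEq A]
    (fc : F → ℝ) (cc : A → Option F → ℝ) (dc : A → A → ℝ)
    (hfc : ∀ f, 0 ≤ fc f) (hcc : ∀ i o, 0 ≤ cc i o)
    (hdc : ∀ i j, 0 ≤ dc i j) (hsym : ∀ i j, dc i j = dc j i)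
    (s : A → Option F) (i : A) (s' : Option F)
    (hopen : ∀ f, s' = some f → ∃ j, s j = some f)
    (himp : ct cc dc (Function.update s i s') i < ct cc dc s i) :
    PhiC fc cc dc (Function.update s i s') < PhiC fc cc dc s := by
  classical
  set t := Function.update s i s' with ht
  have gsymm : ∀ (u : A → Option F) a b, gaux dc u a b = gaux dc u b a := by
    intro u a b
    unfold gaux
    have hc : (b ≠ a ∧ ¬ conn u a b) ↔ (a ≠ b ∧ ¬ conn u b a) := by
      constructor
      · rintro ⟨h1, h2⟩
        exact ⟨h1.symm, fun ⟨f, hf1, hf2⟩ => h2 ⟨f, hf2, hf1⟩⟩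
      · rintro ⟨h1, h2⟩
        exact ⟨h1.symm, fun ⟨f, hf1, hf2⟩ => h2 ⟨f, hf2, hf1⟩⟩
    by_cases h : b ≠ a ∧ ¬ conn u a b
    · rw [if_pos h, if_pos (hc.mp h), hsym a b]
    · rw [if_neg h, if_neg (fun hh => h (hc.mpr hh))]
  have gdiag : ∀ (u : A → Option F) a, gaux dc u a a = 0 := by
    intro u a
    unfold gaux
    exact if_neg (fun h => h.1 rfl)
  have gfix : ∀ a b, a ≠ i → b ≠ i → gaux dc t a b = gaux dc s a b := by
    intro a b ha hb
    have h1 : t a = s a := Function.update_of_ne ha _ _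
    have h2 : t b = s b := Function.update_of_ne hb _ _
    have hc : (b ≠ a ∧ ¬ conn t a b) ↔ (b ≠ a ∧ ¬ conn s a b) := by
      unfold conn; rw [h1, h2]
    unfold gaux
    by_cases h : b ≠ a ∧ ¬ conn t a b
    · rw [if_pos h, if_pos (hc.mp h)]
    · rw [if_neg h, if_neg (fun hh => h (hc.mpr hh))]
  have hsplit : ∀ u : A → Option F,
      (∑ a, ∑ b, gaux dc u a b)
        = 2 * (∑ b, gaux dc u i b)
          + ∑ a ∈ Finset.univ.erase i, ∑ b ∈ Finset.univ.erase i, gaux dc u a b := by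
    intro u
    rw [← Finset.add_sum_erase _ _ (Finset.mem_univ i)]
    have hinner : ∀ a, (∑ b, gaux dc u a b)
        = gaux dc u a i + ∑ b ∈ Finset.univ.erase i, gaux dc u a b := by
      intro a; rw [← Finset.add_sum_erase _ _ (Finset.mem_univ i)]
    rw [Finset.sum_congr rfl (fun a _ => hinner a), Finset.sum_add_distrib]
    have hcol : (∑ a ∈ Finset.univ.erase i, gaux dc u a i)
        = ∑ b ∈ Finset.univ.erase i, gaux dc u i b :=
      Finset.sum_congr rfl (fun a _ => gsymm u a i)
    have hrow : (∑ b, gaux dc u i b) = ∑ b ∈ Finset.univ.erase i, gaux dc u i b := by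
      rw [← Finset.add_sum_erase _ _ (Finset.mem_univ i), gdiag, zero_add]
    rw [hcol, ← hrow]
    ring
  have hccsum : (∑ a, cc a (t a)) - (∑ a, cc a (s a)) = cc i (t i) - cc i (s i) := by
    rw [← Finset.sum_sub_distrib]
    rw [Finset.sum_eq_single i]
    · intro a _ ha
      rw [ht, Function.update_of_ne ha, sub_self]
    · intro h; exact absurd (Finset.mem_univ i) h
  have hrest : (∑ a ∈ Finset.univ.erase i, ∑ b ∈ Finset.univ.erase i, gaux dc t a b)
      = ∑ a ∈ Finset.univ.erase i, ∑ b ∈ Finset.univ.erase i, gaux dc s a b := by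
    refine Finset.sum_congr rfl (fun a ha => Finset.sum_congr rfl (fun b hb => ?_))
    exact gfix a b (Finset.ne_of_mem_erase ha) (Finset.ne_of_mem_erase hb)
  have hPhi0 : Phi0 cc dc t - Phi0 cc dc s = ct cc dc t i - ct cc dc s i := by
    rw [Phi0_eq_gaux, Phi0_eq_gaux, ct_eq_gaux, ct_eq_gaux,
      hsplit t, hsplit s, hrest]
    nlinarith [hccsum]
  have hfcost : fcost fc t ≤ fcost fc s := by
    apply Finset.sum_le_sum_of_subset_of_nonneg
    · intro f hf
      simp only [Finset.mem_filter, Finset.mem_univ, true_and] at hf ⊢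
      obtain ⟨j, hj⟩ := hf
      by_cases hji : j = i
      · subst hji
        rw [ht, Function.update_self] at hj
        exact hopen f hj
      · rw [ht, Function.update_of_ne hji] at hj
        exact ⟨j, hj⟩
    · intro f _ _; exact hfc f
  have hlt : Phi0 cc dc t < Phi0 cc dc s := by linarith
  simp only [PhiC]
  linarith
end

section
/- If a facility f_k cannot be budget-balanced at the optimum, a cheaper assignment exists: let s* be a social-cost-minimizing assignment, and suppose Σ_{i: s*_i = f_k} Q_i(s*) < c(f_k). Then the assignment ŝ obtained by moving every agent i with s*_i = f_k to nBR_i(s*) (with all other agents unchanged) satisfies c(ŝ) < c(s*), a contradiction; hence for every open facility f_k in s*, Σ_{i: s*_i = f_k} Q_i(s*) ≥ c(f_k). -/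
open Finset
open scoped Classical

variable {A F : Type*}

/-- at a social-cost-minimizing assignment `s*`, every open facility can be
budget-balanced from the values (auxiliary lemmas) -/
lemma fcost_step [Fintype F] (fc : F → ℝ) (hfc : ∀ f, 0 ≤ fc f)
    (s t : A → Option F) (fk : F) (hfk : ∃ i, t i = some fk)
    (hsub : ∀ f, (∃ i, s i = some f) → f ≠ fk ∧ ∃ i, t i = some f) :
    fcost fc s + fc fk ≤ fcost fc t := by
  unfold fcost
  have hmem : fk ∈ Finset.univ.filter (fun f => ∃ i, t i = some f) := by
    simp only [Finset.mem_filter, Finset.mem_univ, true_and]; exact hfk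
  have hsub' : Finset.univ.filter (fun f => ∃ i, s i = some f)
      ⊆ (Finset.univ.filter (fun f => ∃ i, t i = some f)).erase fk := by
    intro f hf
    simp only [Finset.mem_filter, Finset.mem_univ, true_and] at hf
    obtain ⟨h1, h2⟩ := hsub f hf
    exact Finset.mem_erase.2 ⟨h1, by
      simp only [Finset.mem_filter, Finset.mem_univ, true_and]; exact h2⟩
  have h1 := Finset.sum_le_sum_of_subset_of_nonneg hsub' (fun f _ _ => hfc f)
  have h2 : fc fk + ∑ f ∈ (Finset.univ.filter
      (fun f => ∃ i, t i = some f)).erase fk, fc f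
      = ∑ f ∈ Finset.univ.filter (fun f => ∃ i, t i = some f), fc f :=
    Finset.add_sum_erase _ fc hmem
  linarith

lemma soc_eq_sum_ct [Fintype A] (cc : A → Option F → ℝ) (dc : A → A → ℝ)
    (s : A → Option F) : soc cc dc s = ∑ i, ct cc dc s i := by
  simp [soc, ct, Finset.sum_add_distrib]

lemma ct_mono [Fintype A] (cc : A → Option F → ℝ) (dc : A → A → ℝ)
    (hdc : ∀ i j, 0 ≤ dc i j) (s t : A → Option F) (i : A)
    (h1 : s i = t i) (h2 : ∀ j, j ≠ i → conn t i j → conn s i j) :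
    ct cc dc s i ≤ ct cc dc t i := by
  unfold ct
  rw [h1]
  refine add_le_add (le_refl _) (Finset.sum_le_sum_of_subset_of_nonneg ?_ ?_)
  · intro j hj
    simp only [Finset.mem_filter, Finset.mem_univ, true_and] at *
    exact ⟨hj.1, fun hc => hj.2 (h2 j hj.1 hc)⟩
  · intro j _ _; exact hdc i j

/-- at a social-cost-minimizing assignment `s*`, every open facility can be
budget-balanced from the values `Q_i(s*)`: for every open facility `fk`,
`Σ_{i : s*_i = fk} Q_i(s*) ≥ c(fk)`.  (Otherwise moving all agents of `fk` to their
next-best responses would yield an assignment of strictly smaller social cost.) -/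
theorem optimum_budget_balanced [Fintype A] [Fintype F] [DecidableEq A]
    (fc : F → ℝ) (cc : A → Option F → ℝ) (dc : A → A → ℝ)
    (hfc : ∀ f, 0 ≤ fc f) (hcc : ∀ i o, 0 ≤ cc i o)
    (hdc : ∀ i j, 0 ≤ dc i j) (hsym : ∀ i j, dc i j = dc j i)
    (sstar : A → Option F)
    (hopt : ∀ s, socC fc cc dc sstar ≤ socC fc cc dc s)
    (nbr : A → Option F)
    (hne : ∀ i, nbr i ≠ sstar i)
    (hmin : ∀ i s', s' ≠ sstar i →
      ct cc dc (Function.update sstar i (nbr i)) i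
        ≤ ct cc dc (Function.update sstar i s') i)
    (hopen : ∀ i f, nbr i = some f → ∃ j, sstar j = some f) :
    ∀ fk : F, (∃ i, sstar i = some fk) →
      fc fk ≤ ∑ i ∈ Finset.univ.filter (fun i => sstar i = some fk),
        (ct cc dc (Function.update sstar i (nbr i)) i - ct cc dc sstar i) := by
  intro fk hfk
  set shat : A → Option F := fun i => if sstar i = some fk then nbr i else sstar i with hshat
  -- facility cost bound
  have hA : fcost fc shat + fc fk ≤ fcost fc sstar := by
    refine fcost_step fc hfc shat sstar fk hfk ?_
    rintro f ⟨i, hi⟩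
    by_cases h : sstar i = some fk
    · simp only [hshat, h, if_pos rfl] at hi
      refine ⟨?_, hopen i f hi⟩
      rintro rfl; exact hne i (hi.trans h.symm)
    · simp only [hshat, if_neg h] at hi
      exact ⟨by rintro rfl; exact h hi, ⟨i, hi⟩⟩
  -- pointwise bounds
  have hT : ∀ i, sstar i = some fk →
      ct cc dc shat i ≤ ct cc dc (Function.update sstar i (nbr i)) i := by
    intro i hi
    refine ct_mono cc dc hdc _ _ i ?_ ?_
    · simp [hshat, hi]
    · rintro j hj ⟨f, hf1, hf2⟩
      rw [Function.update_self] at hf1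
      rw [Function.update_of_ne hj] at hf2
      have hfne : f ≠ fk := by
        rintro rfl; exact hne i (hf1.trans hi.symm)
      have hjne : sstar j ≠ some fk := by rw [hf2]; simpa using hfne
      refine ⟨f, ?_, ?_⟩
      · simp only [hshat]; rw [if_pos hi]; exact hf1
      · simp only [hshat]; rw [if_neg hjne]; exact hf2
  have hNT : ∀ i, sstar i ≠ some fk → ct cc dc shat i ≤ ct cc dc sstar i := by
    intro i hi
    refine ct_mono cc dc hdc _ _ i ?_ ?_
    · simp [hshat, hi]
    · rintro j hj ⟨f, hf1, hf2⟩
      have hfne : f ≠ fk := by rintro rfl; exact hi hf1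
      have hjne : sstar j ≠ some fk := by rw [hf2]; simpa using hfne
      refine ⟨f, ?_, ?_⟩
      · simp only [hshat]; rw [if_neg hi]; exact hf1
      · simp only [hshat]; rw [if_neg hjne]; exact hf2
  set T := Finset.univ.filter (fun i => sstar i = some fk) with hTdef
  have hsplit : ∀ s : A → Option F, (∑ i, ct cc dc s i)
      = (∑ i ∈ T, ct cc dc s i)
        + ∑ i ∈ Finset.univ.filter (fun i => ¬ sstar i = some fk), ct cc dc s i := by
    intro s
    rw [hTdef, Finset.sum_filter_add_sum_filter_not]
  have hB1 : ∑ i ∈ T, ct cc dc shat i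
      ≤ ∑ i ∈ T, ct cc dc (Function.update sstar i (nbr i)) i := by
    refine Finset.sum_le_sum fun i hi => ?_
    rw [hTdef] at hi
    simp only [Finset.mem_filter, Finset.mem_univ, true_and] at hi
    exact hT i hi
  have hB2 : ∑ i ∈ Finset.univ.filter (fun i => ¬ sstar i = some fk), ct cc dc shat i
      ≤ ∑ i ∈ Finset.univ.filter (fun i => ¬ sstar i = some fk), ct cc dc sstar i := by
    refine Finset.sum_le_sum fun i hi => ?_
    simp only [Finset.mem_filter, Finset.mem_univ, true_and] at hi
    exact hNT i hi
  have hopt' := hopt shat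
  have hsoc1 := soc_eq_sum_ct cc dc shat
  have hsoc2 := soc_eq_sum_ct cc dc sstar
  have hd1 := hsplit shat
  have hd2 := hsplit sstar
  have hgoal : ∑ i ∈ T, (ct cc dc (Function.update sstar i (nbr i)) i - ct cc dc sstar i)
      = (∑ i ∈ T, ct cc dc (Function.update sstar i (nbr i)) i)
        - ∑ i ∈ T, ct cc dc sstar i := Finset.sum_sub_distrib _ _
  rw [hgoal]
  unfold socC at hopt'
  linarith
end

section
/- Tradeoff lemma for payments: fix τ ≥ 2 and let s* minimize social cost. Let Δ = Σ_i (c̃_i(s*) − c̃_i(b^i)), where b^i = (b_i, s*_{-i}) and b_i minimizes c̃_i(·, s*_{-i}). Suppose there exists an assignment s with Σ_i c̃_i(b^i) ≥ (2/τ)·Φ̃(s), and suppose there exists a stable state ŝ reachable with Φ(s) ≥ Φ(ŝ) ≥ (1/2)c(ŝ). Then Δ/c(s*) ≤ 1 − (1/τ)·(c(ŝ)/c(s*)). -/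
open Finset
open scoped Classical

variable {A F : Type*}

/-- A state `(s, γ)` is stable: prices are nonnegative, only paid at a used facility,
budget balanced (each open facility's cost is exactly covered), and no agent can
strictly decrease its total cost by deviating (anticipating price 0 elsewhere). -/
def Stable [Fintype A] [Fintype F] [DecidableEq A] (fc : F → ℝ) (cc : A → Option F → ℝ)
    (dc : A → A → ℝ) (s : A → Option F) (γ : A → ℝ) : Prop :=
  (∀ i, 0 ≤ γ i) ∧ (∀ i, s i = none → γ i = 0) ∧
    (∀ f, (∃ i, s i = some f) →
      ∑ i ∈ Finset.univ.filter (fun i => s i = some f), γ i = fc f) ∧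
    (∀ i s', s' ≠ s i →
      ct cc dc s i + γ i ≤ ct cc dc (Function.update s i s') i)

/-- tradeoff lemma: let `τ ≥ 2`, `s*` minimize social cost, `b i` be a best
response of agent `i` against `s*_{-i}`, and
`Δ = Σ_i (c̃_i(s*) − c̃_i(b^i))` with `b^i = (b_i, s*_{-i})`.  If some assignment `s`
(opening no facility beyond those open in `s*`) satisfies `Σ_i c̃_i(b^i) ≥ (2/τ)·Φ̃(s)`,
and a stable state `(ŝ, γ)` satisfies `Φ(s) ≥ Φ(ŝ) ≥ (1/2)·c(ŝ)`, then
`Δ/c(s*) ≤ 1 − (1/τ)·(c(ŝ)/c(s*))`. -/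
theorem payment_tradeoff_lemma [Fintype A] [Fintype F] [DecidableEq A]
    (fc : F → ℝ) (cc : A → Option F → ℝ) (dc : A → A → ℝ)
    (hfc : ∀ f, 0 ≤ fc f) (hcc : ∀ i o, 0 ≤ cc i o)
    (hdc : ∀ i j, 0 ≤ dc i j) (hsym : ∀ i j, dc i j = dc j i)
    (τ : ℝ) (hτ : 2 ≤ τ)
    (sstar : A → Option F) (hopt : ∀ s, socC fc cc dc sstar ≤ socC fc cc dc s)
    (b : A → Option F)
    (hb : ∀ i s', ct cc dc (Function.update sstar i (b i)) i
      ≤ ct cc dc (Function.update sstar i s') i)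
    (s : A → Option F)
    (hs : (2 / τ) * Phi0 cc dc s ≤ ∑ i, ct cc dc (Function.update sstar i (b i)) i)
    (hsf : fcost fc s ≤ fcost fc sstar)
    (shat : A → Option F) (γ : A → ℝ) (hstable : Stable fc cc dc shat γ)
    (h1 : PhiC fc cc dc shat ≤ PhiC fc cc dc s)
    (h2 : (1 / 2) * socC fc cc dc shat ≤ PhiC fc cc dc shat) :
    (∑ i, (ct cc dc sstar i - ct cc dc (Function.update sstar i (b i)) i))
        / socC fc cc dc sstar
      ≤ 1 - (1 / τ) * (socC fc cc dc shat / socC fc cc dc sstar) := by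
  have hτ0 : (0:ℝ) < τ := lt_of_lt_of_le (by norm_num) hτ
  -- soc = sum of ct
  have hsoc : ∀ t : A → Option F, soc cc dc t = ∑ i, ct cc dc t i := by
    intro t
    simp [soc, ct, Finset.sum_add_distrib]
  -- nonnegativity facts
  have hfc0 : ∀ t : A → Option F, 0 ≤ fcost fc t := by
    intro t
    exact Finset.sum_nonneg fun f _ => hfc f
  have hsocnn : 0 ≤ socC fc cc dc sstar := by
    have h3 : 0 ≤ soc cc dc sstar := by
      rw [hsoc]
      refine Finset.sum_nonneg fun i _ => ?_
      exact add_nonneg (hcc _ _) (Finset.sum_nonneg fun j _ => hdc i j)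
    exact add_nonneg (hfc0 sstar) h3
  -- key inequality: (1/τ) * c(ŝ) ≤ fcost s* + Σ ct(bⁱ)
  have hkey : (1/τ) * socC fc cc dc shat
      ≤ fcost fc sstar + ∑ i, ct cc dc (Function.update sstar i (b i)) i := by
    have e1 : (1/τ) * socC fc cc dc shat ≤ (2/τ) * PhiC fc cc dc shat := by
      have := mul_le_mul_of_nonneg_left h2 (le_of_lt (by positivity : (0:ℝ) < 2/τ))
      calc (1/τ) * socC fc cc dc shat = (2/τ) * ((1/2) * socC fc cc dc shat) := by ring
        _ ≤ (2/τ) * PhiC fc cc dc shat := this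
    have e2 : (2/τ) * PhiC fc cc dc shat ≤ (2/τ) * PhiC fc cc dc s :=
      mul_le_mul_of_nonneg_left h1 (le_of_lt (by positivity))
    have e3 : (2/τ) * PhiC fc cc dc s
        ≤ fcost fc sstar + ∑ i, ct cc dc (Function.update sstar i (b i)) i := by
      have hfs : (2/τ) * fcost fc s ≤ fcost fc sstar := by
        have h21 : (2/τ) ≤ 1 := by
          rw [div_le_one hτ0]; exact hτ
        calc (2/τ) * fcost fc s ≤ 1 * fcost fc s :=
              mul_le_mul_of_nonneg_right h21 (hfc0 s)
          _ = fcost fc s := one_mul _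
          _ ≤ fcost fc sstar := hsf
      calc (2/τ) * PhiC fc cc dc s
          = (2/τ) * fcost fc s + (2/τ) * Phi0 cc dc s := by
            simp [PhiC]; ring
        _ ≤ fcost fc sstar + ∑ i, ct cc dc (Function.update sstar i (b i)) i :=
            add_le_add hfs hs
    linarith
  -- Δ ≤ c(s*) − (1/τ) c(ŝ)
  have hDelta : (∑ i, (ct cc dc sstar i - ct cc dc (Function.update sstar i (b i)) i))
      ≤ socC fc cc dc sstar - (1/τ) * socC fc cc dc shat := by
    have : (∑ i, (ct cc dc sstar i - ct cc dc (Function.update sstar i (b i)) i))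
        = socC fc cc dc sstar - (fcost fc sstar
            + ∑ i, ct cc dc (Function.update sstar i (b i)) i) := by
      simp only [socC, hsoc, Finset.sum_sub_distrib]; ring
    linarith
  rcases eq_or_lt_of_le hsocnn with hC | hC
  · rw [← hC]
    simp
  · rw [div_le_iff₀ hC, sub_mul, one_mul, mul_assoc,
      div_mul_cancel₀ _ (ne_of_gt hC)]
    linarith
end

section
/- Partition lemma for best responses: there exists a partition of the agents into sets A_1 and A_2 such that within each part, no two agents 'switch places': for all i, j in the same part with b_i ≠ b_j, it is not the case that both b_i = s*_j and b_j = s*_i. -/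
/-- partition lemma: given an assignment `s*` and a best-response
strategy `b i` for each agent, the agents can be partitioned into two sets (the set
where `P` holds and its complement) such that no two agents in the same part "switch
places": there are no `i, j` in the same part with `b i ≠ b j`, `b i = s*_j` and
`b j = s*_i` (equality of strategies meaning sharing an actual facility, per the
convention that two agents at ∅ are not together). -/
theorem switch_places_partition {A F : Type*} (sstar b : A → Option F) :
    ∃ P : A → Prop, ∀ i j : A, (P i ↔ P j) → b i ≠ b j →
      ¬ ((∃ f, b i = some f ∧ sstar j = some f) ∧
         (∃ f, b j = some f ∧ sstar i = some f)) := by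
  classical
  refine ⟨fun i => ∃ f g, b i = some f ∧ sstar i = some g ∧ WellOrderingRel f g, ?_⟩
  rintro i j hiff hne ⟨⟨f, hbi, hsj⟩, ⟨g, hbj, hsi⟩⟩
  have hfg : f ≠ g := by
    rintro rfl; exact hne (hbi.trans hbj.symm)
  rcases trichotomous_of (WellOrderingRel (α := F)) f g with h | h | h
  · have hPj : ∃ f' g', b j = some f' ∧ sstar j = some g' ∧ WellOrderingRel f' g' :=
      hiff.mp ⟨f, g, hbi, hsi, h⟩
    obtain ⟨f', g', hb', hs', hr'⟩ := hPj
    rw [hbj] at hb'; rw [hsj] at hs'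
    cases Option.some_injective _ hb'
    cases Option.some_injective _ hs'
    exact (asymm h) hr'
  · exact hfg h
  · have hPi : ∃ f' g', b i = some f' ∧ sstar i = some g' ∧ WellOrderingRel f' g' :=
      hiff.mpr ⟨g, f, hbj, hsj, h⟩
    obtain ⟨f', g', hb', hs', hr'⟩ := hPi
    rw [hbi] at hb'; rw [hsi] at hs'
    cases Option.some_injective _ hb'
    cases Option.some_injective _ hs'
    exact (asymm h) hr'
end

section
/- Coalitional deviation lower bound: with the partition A_1, A_2 as in the switch-places lemma, let s^1 be the assignment where each agent i ∈ A_1 plays b_i and each agent in A_2 plays s*_i. Then Σ_{i ∈ A_1} c̃_i(b^i) ≥ CC(s^1, A_1) + DC(s^1, A_1, A_1) + DC(s^1, A_1, A_2), where b^i = (b_i, s*_{-i}), CC(s, S) = Σ_{i∈S} cc(i, s_i), and DC(s, S, T) = Σ_{unordered pairs (i,j), i∈S, j∈T, s_i ≠ s_j} dc(i,j). -/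
open Finset
open scoped Classical

variable {A F : Type*}

/-- coalitional deviation lower bound: let `A_1, A_2` partition the agents
with no two agents of `A_1` switching places, and let `s^1` be the assignment where every
agent of `A_1` plays its best response `b i` and every agent of `A_2` stays at `s*`.
Then `Σ_{i ∈ A_1} c̃_i(b^i) ≥ CC(s^1,A_1) + DC(s^1,A_1,A_1) + DC(s^1,A_1,A_2)`,
where `DC(s,S,T)` sums `dc(i,j)` over unordered disconnected pairs with one endpoint in
each set (so `DC(s,A_1,A_1)` is half of the corresponding double sum). -/
theorem coalition_deviation_lower_bound [Fintype A] [DecidableEq A]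
    (cc : A → Option F → ℝ) (dc : A → A → ℝ)
    (hcc : ∀ i o, 0 ≤ cc i o) (hdc : ∀ i j, 0 ≤ dc i j)
    (hsym : ∀ i j, dc i j = dc j i)
    (sstar b : A → Option F) (A1 A2 : Finset A)
    (hcover : A1 ∪ A2 = Finset.univ) (hdisj : Disjoint A1 A2)
    (hfree : ∀ i ∈ A1, ∀ j ∈ A1, b i ≠ b j →
      ¬ ((∃ f, b i = some f ∧ sstar j = some f) ∧
         (∃ f, b j = some f ∧ sstar i = some f))) :
    let s1 : A → Option F := fun i => if i ∈ A1 then b i else sstar i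
    (∑ i ∈ A1, cc i (s1 i))
      + (1 / 2) * (∑ i ∈ A1, ∑ j ∈ A1.filter (fun j => j ≠ i ∧ ¬ conn s1 i j), dc i j)
      + (∑ i ∈ A1, ∑ j ∈ A2.filter (fun j => ¬ conn s1 i j), dc i j)
    ≤ ∑ i ∈ A1, ct cc dc (Function.update sstar i (b i)) i := by
  intro s1
  classical
  have hmem : ∀ j ∈ A2, j ∉ A1 := fun j hj hj1 => Finset.disjoint_left.mp hdisj hj1 hj
  have hs1A1 : ∀ i ∈ A1, s1 i = b i := fun i hi => if_pos hi
  have hs1A2 : ∀ j ∈ A2, s1 j = sstar j := fun j hj => if_neg (hmem j hj)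
  have hct : ∀ i ∈ A1, ct cc dc (Function.update sstar i (b i)) i
      = cc i (b i)
        + (∑ j ∈ A1, if j ≠ i ∧ ¬ conn (Function.update sstar i (b i)) i j then dc i j else 0)
        + (∑ j ∈ A2, if j ≠ i ∧ ¬ conn (Function.update sstar i (b i)) i j then dc i j else 0) := by
    intro i hi
    unfold ct
    rw [Function.update_self, Finset.sum_filter, ← hcover, Finset.sum_union hdisj, add_assoc]
    congr!
  simp only [Finset.sum_filter]
  rw [Finset.sum_congr rfl hct]
  simp only [Finset.sum_add_distrib]
  have e1 : ∑ i ∈ A1, cc i (s1 i) = ∑ i ∈ A1, cc i (b i) :=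
    Finset.sum_congr rfl (fun i hi => by rw [hs1A1 i hi])
  have e2 : (∑ i ∈ A1, ∑ j ∈ A2, if ¬ conn s1 i j then dc i j else 0)
      = ∑ i ∈ A1, ∑ j ∈ A2,
          if j ≠ i ∧ ¬ conn (Function.update sstar i (b i)) i j then dc i j else 0 := by
    refine Finset.sum_congr rfl (fun i hi => Finset.sum_congr rfl (fun j hj => ?_))
    have hne : j ≠ i := fun h => hmem j hj (h ▸ hi)
    have hc : conn (Function.update sstar i (b i)) i j ↔ conn s1 i j := by
      unfold conn
      rw [Function.update_self, Function.update_of_ne hne, hs1A1 i hi, hs1A2 j hj]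
    exact if_congr (by simp [hne, hc]) rfl rfl
  have key : ∀ i ∈ A1, ∀ j ∈ A1,
      (if j ≠ i ∧ ¬ conn s1 i j then dc i j else 0)
      ≤ (if j ≠ i ∧ ¬ conn (Function.update sstar i (b i)) i j then dc i j else 0)
        + (if i ≠ j ∧ ¬ conn (Function.update sstar j (b j)) j i then dc j i else 0) := by
    intro i hi j hj
    have hlog : j ≠ i → ¬ conn s1 i j → conn (Function.update sstar i (b i)) i j →
        ¬ conn (Function.update sstar j (b j)) j i := by
      intro hne hnc hq hq2
      obtain ⟨f, hf1, hf2⟩ := hq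
      rw [Function.update_self] at hf1
      rw [Function.update_of_ne hne] at hf2
      obtain ⟨g, hg1, hg2⟩ := hq2
      rw [Function.update_self] at hg1
      rw [Function.update_of_ne hne.symm] at hg2
      by_cases hbe : b i = b j
      · exact hnc ⟨f, by rw [hs1A1 i hi]; exact hf1,
          by rw [hs1A1 j hj, ← hbe]; exact hf1⟩
      · exact hfree i hi j hj hbe ⟨⟨f, hf1, hf2⟩, ⟨g, hg1, hg2⟩⟩
    by_cases h1 : j ≠ i ∧ ¬ conn s1 i j
    · rw [if_pos h1]
      obtain ⟨hne, hnc⟩ := h1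
      by_cases h2 : conn (Function.update sstar i (b i)) i j
      · have h3 : ¬ conn (Function.update sstar j (b j)) j i := hlog hne hnc h2
        rw [if_neg (fun h => h.2 h2), if_pos ⟨hne.symm, h3⟩, hsym i j]
        simp
      · rw [if_pos ⟨hne, h2⟩]
        split_ifs <;> linarith [hdc j i]
    · rw [if_neg h1]
      split_ifs <;> linarith [hdc i j, hdc j i]
  have e3 : (1 / 2) * (∑ i ∈ A1, ∑ j ∈ A1, if j ≠ i ∧ ¬ conn s1 i j then dc i j else 0)
      ≤ ∑ i ∈ A1, ∑ j ∈ A1,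
          if j ≠ i ∧ ¬ conn (Function.update sstar i (b i)) i j then dc i j else 0 := by
    have hL : (∑ i ∈ A1, ∑ j ∈ A1, if j ≠ i ∧ ¬ conn s1 i j then dc i j else 0)
        ≤ (∑ i ∈ A1, ∑ j ∈ A1,
            if j ≠ i ∧ ¬ conn (Function.update sstar i (b i)) i j then dc i j else 0)
          + (∑ i ∈ A1, ∑ j ∈ A1,
            if j ≠ i ∧ ¬ conn (Function.update sstar i (b i)) i j then dc i j else 0) := by
      calc (∑ i ∈ A1, ∑ j ∈ A1, if j ≠ i ∧ ¬ conn s1 i j then dc i j else 0)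
          ≤ ∑ i ∈ A1, ∑ j ∈ A1,
              ((if j ≠ i ∧ ¬ conn (Function.update sstar i (b i)) i j then dc i j else 0)
               + (if i ≠ j ∧ ¬ conn (Function.update sstar j (b j)) j i then dc j i else 0)) :=
            Finset.sum_le_sum (fun i hi => Finset.sum_le_sum (fun j hj => key i hi j hj))
        _ = (∑ i ∈ A1, ∑ j ∈ A1,
              if j ≠ i ∧ ¬ conn (Function.update sstar i (b i)) i j then dc i j else 0)
            + (∑ i ∈ A1, ∑ j ∈ A1,
              if i ≠ j ∧ ¬ conn (Function.update sstar j (b j)) j i then dc j i else 0) := by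
            simp [Finset.sum_add_distrib]
        _ = (∑ i ∈ A1, ∑ j ∈ A1,
              if j ≠ i ∧ ¬ conn (Function.update sstar i (b i)) i j then dc i j else 0)
            + (∑ i ∈ A1, ∑ j ∈ A1,
              if j ≠ i ∧ ¬ conn (Function.update sstar i (b i)) i j then dc i j else 0) := by
            rw [Finset.sum_comm (s := A1) (t := A1)
              (f := fun i j => if i ≠ j ∧ ¬ conn (Function.update sstar j (b j)) j i then dc j i else 0)]
    linarith
  linarith
end

section
/- Linear bound on the rounding failure probability: for every integer m ≥ 1 and every x ∈ [1/2, 1], ((m − (1 − x))/m)^m ≤ 2(1 − 1/√e)·x + (2/√e − 1), and moreover the right-hand side is at most (2/√e)·x on [1/2, 1]. -/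
lemma sqrt_exp_one : Real.sqrt (Real.exp 1) = Real.exp (1/2) := by
  rw [show Real.exp 1 = Real.exp (1/2) * Real.exp (1/2) by rw [← Real.exp_add]; norm_num,
    Real.sqrt_mul_self (Real.exp_pos _).le]

lemma g_half_le (m : ℕ) (hm : 1 ≤ m) :
    (((m : ℝ) - (1 - 1/2)) / m) ^ m ≤ 1 / Real.sqrt (Real.exp 1) := by
  have hm0 : (0:ℝ) < m := by exact_mod_cast hm
  have h1 : ((m : ℝ) - (1 - 1/2)) / m = 1 - 1/(2*m) := by field_simp; ring
  have hb : (0:ℝ) ≤ 1 - 1/(2*m) := by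
    have : 1/(2*(m:ℝ)) ≤ 1/2 := by
      have hm1 : (1:ℝ) ≤ m := by exact_mod_cast hm
      apply div_le_div_of_nonneg_left (by norm_num) (by norm_num)
      nlinarith
    linarith
  have hle : 1 - 1/(2*(m:ℝ)) ≤ Real.exp (-(1/(2*m))) := by
    have := Real.add_one_le_exp (-(1/(2*(m:ℝ))))
    linarith
  have hpow : (1 - 1/(2*(m:ℝ)))^m ≤ (Real.exp (-(1/(2*m))))^m :=
    pow_le_pow_left₀ hb hle m
  rw [h1]
  calc (1 - 1/(2*(m:ℝ)))^m ≤ (Real.exp (-(1/(2*m))))^m := hpow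
    _ = Real.exp (-(1/2)) := by
        rw [← Real.exp_nat_mul]
        congr 1
        field_simp
    _ = 1 / Real.sqrt (Real.exp 1) := by
        rw [sqrt_exp_one, Real.exp_neg]
        simp

/-- for every integer `m ≥ 1` and `x ∈ [1/2, 1]`,
`((m − (1 − x))/m)^m ≤ 2(1 − 1/√e)·x + (2/√e − 1)`, and moreover this affine bound is
at most `(2/√e)·x` on `[1/2, 1]`. -/
theorem chord_bound (m : ℕ) (hm : 1 ≤ m) (x : ℝ) (hx : x ∈ Set.Icc (1 / 2 : ℝ) 1) :
    (((m : ℝ) - (1 - x)) / m) ^ m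
        ≤ 2 * (1 - 1 / Real.sqrt (Real.exp 1)) * x + (2 / Real.sqrt (Real.exp 1) - 1) ∧
      2 * (1 - 1 / Real.sqrt (Real.exp 1)) * x + (2 / Real.sqrt (Real.exp 1) - 1)
        ≤ (2 / Real.sqrt (Real.exp 1)) * x := by
  obtain ⟨hx1, hx2⟩ := hx
  have hm0 : (0:ℝ) < m := by exact_mod_cast hm
  set s : ℝ := 1 / Real.sqrt (Real.exp 1) with hs
  have hs_pos : 0 < s := by positivity
  have hs_lt : 1/2 < s := by
    have hsq : Real.exp (1/2 : ℝ) * Real.exp (1/2) = Real.exp 1 := by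
      rw [← Real.exp_add]; norm_num
    have h2 : Real.exp (1/2 : ℝ) < 2 := by
      nlinarith [Real.exp_one_lt_d9, Real.exp_pos (1/2 : ℝ)]
    rw [hs, sqrt_exp_one, lt_div_iff₀ (Real.exp_pos _)]
    nlinarith
  constructor
  · -- convexity chord bound
    have hconv : ConvexOn ℝ (Set.Ici (0:ℝ)) (fun t : ℝ => t ^ m) := convexOn_pow m
    set f : ℝ → ℝ := fun y => (((m:ℝ) - 1 + y) / m) ^ m with hf
    have hconv' : ConvexOn ℝ (Set.Icc (1/2 : ℝ) 1) f := by
      constructor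
      · exact convex_Icc _ _
      · intro a ha b hb p q hp hq hpq
        have hmem : ∀ y ∈ Set.Icc (1/2:ℝ) 1, (0:ℝ) ≤ ((m:ℝ) - 1 + y) / m := by
          intro y hy
          apply div_nonneg _ hm0.le
          have : (1:ℝ) ≤ m := by exact_mod_cast hm
          linarith [hy.1]
        have key := hconv.2 (Set.mem_Ici.2 (hmem a ha)) (Set.mem_Ici.2 (hmem b hb)) hp hq hpq
        have harg : ((m:ℝ) - 1 + (p • a + q • b)) / m
            = p • (((m:ℝ) - 1 + a) / m) + q • (((m:ℝ) - 1 + b) / m) := by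
          simp only [smul_eq_mul]
          field_simp
          nlinarith [hpq]
        simp only [hf, smul_eq_mul] at key ⊢
        simp only [smul_eq_mul] at harg
        rw [harg]
        exact key
    have hcomb : x = (2 - 2*x) • (1/2 : ℝ) + (2*x - 1) • (1 : ℝ) := by
      simp only [smul_eq_mul]; ring
    have ha : (0:ℝ) ≤ 2 - 2*x := by linarith
    have hb : (0:ℝ) ≤ 2*x - 1 := by linarith
    have hsum : (2 - 2*x) + (2*x - 1) = 1 := by ring
    have key := hconv'.2 (Set.mem_Icc.2 ⟨le_refl _, by norm_num⟩)
      (Set.mem_Icc.2 ⟨by norm_num, le_refl _⟩) ha hb hsum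
    rw [← hcomb] at key
    have hfx : (((m : ℝ) - (1 - x)) / m) ^ m = f x := by
      simp only [hf]; ring_nf
    have hf_half : f (1/2) ≤ s := by
      have := g_half_le m hm
      simp only [hf]
      convert this using 3
      ring
    have hf_one : f 1 = 1 := by
      simp only [hf]
      rw [show (m:ℝ) - 1 + 1 = m by ring, div_self hm0.ne', one_pow]
    rw [hfx]
    calc f x ≤ (2 - 2*x) • f (1/2) + (2*x - 1) • f 1 := key
      _ ≤ (2 - 2*x) * s + (2*x - 1) * 1 := by
          simp only [smul_eq_mul]
          gcongr
          exact hf_one.le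
      _ = 2 * (1 - s) * x + (2 * s - 1) := by ring
      _ = 2 * (1 - s) * x + (2 / Real.sqrt (Real.exp 1) - 1) := by
          rw [hs]; ring
  · have : 2 / Real.sqrt (Real.exp 1) = 2 * s := by rw [hs]; ring
    rw [this]
    nlinarith
end

section
/- Correctness of the threshold rounding (Algorithm 1): given any feasible fractional solution (x*_{ik}, x*_{ij}, x*_{ijk}, x*_k) of the LP relaxation, the rounded solution x̂ defined by x̂_{ik} = 1 iff x*_{ik} ≥ 1/(m+1), x̂_{ijk} = min(x̂_{ik}, x̂_{jk}), x̂_{ij} = max(0, 1 − Σ_k x̂_{ijk}), x̂_k = max_i x̂_{ik}, is a feasible integral solution, and every rounded variable satisfies x̂ ≤ (m+1)·x*. Consequently the objective value of x̂ is at most (m+1) times that of x*. -/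
open Finset
open scoped Classical

/-- Threshold rounding of the fractional `x_{ik}`: round up to 1 iff `x_{ik} ≥ 1/(m+1)`. -/
noncomputable def roundX {A K : Type*} (m : ℕ) (x : A → K → ℝ) (i : A) (k : K) : ℝ :=
  if (1 : ℝ) / (m + 1) ≤ x i k then 1 else 0

/-- Rounded `x_{ijk} = min(x̂_{ik}, x̂_{jk})`. -/
noncomputable def roundZ {A K : Type*} (m : ℕ) (x : A → K → ℝ) (i j : A) (k : K) : ℝ :=
  min (roundX m x i k) (roundX m x j k)

/-- Rounded `x_{ij} = max(0, 1 − Σ_k x̂_{ijk})`. -/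
noncomputable def roundY {A K : Type*} [Fintype K] (m : ℕ) (x : A → K → ℝ) (i j : A) : ℝ :=
  max 0 (1 - ∑ k, roundZ m x i j k)

/-- Rounded `x_k = max_i x̂_{ik}` (equal to 1 iff some `x̂_{ik} = 1`). -/
noncomputable def roundU {A K : Type*} (m : ℕ) (x : A → K → ℝ) (k : K) : ℝ :=
  if ∃ i, (1 : ℝ) / (m + 1) ≤ x i k then 1 else 0

/-- correctness of the threshold rounding, Algorithm 1: from any feasible
fractional LP solution `(x, y, z, u)` (with `m` facilities), the rounded solution is a
feasible integral solution, every rounded variable is at most `(m+1)` times the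
corresponding fractional one, and hence the objective value of the rounded solution is
at most `(m+1)` times the fractional objective value. -/
theorem threshold_rounding {A K : Type*} [Fintype A] [Fintype K]
    (m : ℕ) (hm : Fintype.card K = m)
    (w : A → K → ℝ) (d : A → A → ℝ) (c : K → ℝ)
    (hw : ∀ i k, 0 ≤ w i k) (hd : ∀ i j, 0 ≤ d i j)
    (hds : ∀ i j, d i j = d j i) (hc : ∀ k, 0 ≤ c k)
    (x : A → K → ℝ) (y : A → A → ℝ) (z : A → A → K → ℝ) (u : K → ℝ)
    (hys : ∀ i j, y i j = y j i) (hzs : ∀ i j k, z i j k = z j i k)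
    (h1 : ∀ i j k, z i j k ≤ x i k) (h2 : ∀ i j k, z i j k ≤ x j k)
    (h3 : ∀ i j, 1 - y i j ≤ ∑ k, z i j k)
    (h4 : ∀ i k, x i k ≤ u k)
    (hx01 : ∀ i k, x i k ∈ Set.Icc (0 : ℝ) 1)
    (hy01 : ∀ i j, y i j ∈ Set.Icc (0 : ℝ) 1)
    (hz01 : ∀ i j k, z i j k ∈ Set.Icc (0 : ℝ) 1)
    (hu01 : ∀ k, u k ∈ Set.Icc (0 : ℝ) 1) :
    (∀ i j k, roundZ m x i j k ≤ roundX m x i k ∧ roundZ m x i j k ≤ roundX m x j k) ∧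
    (∀ i j, 1 - roundY m x i j ≤ ∑ k, roundZ m x i j k) ∧
    (∀ i k, roundX m x i k ≤ roundU m x k) ∧
    (∀ i k, roundX m x i k = 0 ∨ roundX m x i k = 1) ∧
    (∀ i j k, roundZ m x i j k = 0 ∨ roundZ m x i j k = 1) ∧
    (∀ i j, roundY m x i j = 0 ∨ roundY m x i j = 1) ∧
    (∀ k, roundU m x k = 0 ∨ roundU m x k = 1) ∧
    (∀ i k, roundX m x i k ≤ (m + 1) * x i k) ∧
    (∀ i j, roundY m x i j ≤ (m + 1) * y i j) ∧
    (∀ k, roundU m x k ≤ (m + 1) * u k) ∧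
    ((∑ i, ∑ k, w i k * roundX m x i k)
        + (∑ i, ∑ j ∈ Finset.univ.filter (fun j => j ≠ i), d i j * roundY m x i j)
        + (∑ k, c k * roundU m x k)
      ≤ (m + 1) * ((∑ i, ∑ k, w i k * x i k)
        + (∑ i, ∑ j ∈ Finset.univ.filter (fun j => j ≠ i), d i j * y i j)
        + (∑ k, c k * u k))) := by
  have hmpos : (0:ℝ) < m + 1 := by positivity
  have hX01 : ∀ i k, roundX m x i k = 0 ∨ roundX m x i k = 1 := by
    intro i k; unfold roundX; split <;> simp
  have hXnn : ∀ i k, 0 ≤ roundX m x i k := by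
    intro i k; rcases hX01 i k with h | h <;> rw [h] <;> norm_num
  have hZ01 : ∀ i j k, roundZ m x i j k = 0 ∨ roundZ m x i j k = 1 := by
    intro i j k; unfold roundZ
    rcases hX01 i k with h | h <;> rcases hX01 j k with h' | h' <;>
      rw [h, h'] <;> simp
  have hZnn : ∀ i j k, 0 ≤ roundZ m x i j k := by
    intro i j k; rcases hZ01 i j k with h | h <;> rw [h] <;> norm_num
  have hU01 : ∀ k, roundU m x k = 0 ∨ roundU m x k = 1 := by
    intro k; unfold roundU; split <;> simp
  have hXle : ∀ i k, roundX m x i k ≤ (m + 1) * x i k := by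
    intro i k; unfold roundX; split
    · rename_i h
      rw [div_le_iff₀ hmpos] at h
      nlinarith [h]
    · have := (hx01 i k).1; positivity
  -- key dichotomy on the sum of rounded z's
  have hdich : ∀ i j, (∀ k, roundZ m x i j k = 0) ∨
      (1:ℝ) ≤ ∑ k, roundZ m x i j k := by
    intro i j
    by_cases h : ∀ k, roundZ m x i j k = 0
    · exact Or.inl h
    · right
      push_neg at h
      obtain ⟨k0, hk0⟩ := h
      have h1 : roundZ m x i j k0 = 1 := (hZ01 i j k0).resolve_left hk0
      calc (1:ℝ) = roundZ m x i j k0 := h1.symm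
        _ ≤ ∑ k, roundZ m x i j k :=
          Finset.single_le_sum (fun k _ => hZnn i j k) (Finset.mem_univ k0)
  have hY01 : ∀ i j, roundY m x i j = 0 ∨ roundY m x i j = 1 := by
    intro i j
    rcases hdich i j with h | h
    · right
      unfold roundY
      rw [Finset.sum_congr rfl (fun k _ => h k)]
      simp
    · left
      unfold roundY
      rw [max_eq_left]; linarith
  have hYle : ∀ i j, roundY m x i j ≤ (m + 1) * y i j := by
    intro i j
    rcases hdich i j with h | h
    · -- all rounded z are 0, so each z i j k ≤ 1/(m+1)
      have hzk : ∀ k, z i j k ≤ 1 / (m + 1) := by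
        intro k
        have h0 := h k
        unfold roundZ roundX at h0
        by_cases hik : (1:ℝ) / (m + 1) ≤ x i k <;>
          by_cases hjk : (1:ℝ) / (m + 1) ≤ x j k
        · rw [if_pos hik, if_pos hjk] at h0; norm_num at h0
        · exact le_of_lt (lt_of_le_of_lt (h2 i j k) (not_le.mp hjk))
        · exact le_of_lt (lt_of_le_of_lt (h1 i j k) (not_le.mp hik))
        · exact le_of_lt (lt_of_le_of_lt (h1 i j k) (not_le.mp hik))
      have hsum : ∑ k, z i j k ≤ (m : ℝ) * (1 / (m + 1)) := by
        calc ∑ k, z i j k ≤ ∑ _k : K, (1:ℝ) / (m + 1) :=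
              Finset.sum_le_sum (fun k _ => hzk k)
          _ = (Fintype.card K : ℝ) * (1 / (m + 1)) := by
              rw [Finset.sum_const, Finset.card_univ, nsmul_eq_mul]
          _ = (m : ℝ) * (1 / (m + 1)) := by rw [hm]
      have h3' := h3 i j
      have hkey : (m + 1 : ℝ) * (1 / (m + 1)) = 1 := by field_simp
      have hy : (1:ℝ) ≤ (m + 1) * y i j := by nlinarith [h3', hsum]
      have : roundY m x i j ≤ 1 := by
        rcases hY01 i j with h' | h' <;> rw [h'] <;> norm_num
      linarith
    · have : roundY m x i j = 0 := by
        unfold roundY; rw [max_eq_left]; linarith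
      rw [this]
      have := (hy01 i j).1; positivity
  have hUle : ∀ k, roundU m x k ≤ (m + 1) * u k := by
    intro k; unfold roundU; split
    · rename_i h
      obtain ⟨i, hi⟩ := h
      have : (1:ℝ) / (m + 1) ≤ u k := le_trans hi (h4 i k)
      rw [div_le_iff₀ hmpos] at this
      nlinarith [this]
    · have := (hu01 k).1; positivity
  refine ⟨fun i j k => ⟨min_le_left _ _, min_le_right _ _⟩,
    fun i j => ?_, ?_, hX01, hZ01, hY01, hU01, hXle, hYle, hUle, ?_⟩
  · have : 1 - ∑ k, roundZ m x i j k ≤ roundY m x i j := le_max_right _ _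
    linarith
  · intro i k
    unfold roundX roundU
    split
    · rename_i h
      rw [if_pos ⟨i, h⟩]
    · rcases hU01 k with h | h <;> unfold roundU at h <;> rw [h] <;> norm_num
  · have t1 : (∑ i, ∑ k, w i k * roundX m x i k)
        ≤ (m + 1) * ∑ i, ∑ k, w i k * x i k := by
      rw [Finset.mul_sum]
      refine Finset.sum_le_sum fun i _ => ?_
      rw [Finset.mul_sum]
      refine Finset.sum_le_sum fun k _ => ?_
      calc w i k * roundX m x i k ≤ w i k * ((m + 1) * x i k) :=
            mul_le_mul_of_nonneg_left (hXle i k) (hw i k)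
        _ = (m + 1) * (w i k * x i k) := by ring
    have t2 : (∑ i, ∑ j ∈ Finset.univ.filter (fun j => j ≠ i), d i j * roundY m x i j)
        ≤ (m + 1) * ∑ i, ∑ j ∈ Finset.univ.filter (fun j => j ≠ i), d i j * y i j := by
      rw [Finset.mul_sum]
      refine Finset.sum_le_sum fun i _ => ?_
      rw [Finset.mul_sum]
      refine Finset.sum_le_sum fun j _ => ?_
      calc d i j * roundY m x i j ≤ d i j * ((m + 1) * y i j) :=
            mul_le_mul_of_nonneg_left (hYle i j) (hd i j)
        _ = (m + 1) * (d i j * y i j) := by ring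
    have t3 : (∑ k, c k * roundU m x k) ≤ (m + 1) * ∑ k, c k * u k := by
      rw [Finset.mul_sum]
      refine Finset.sum_le_sum fun k _ => ?_
      calc c k * roundU m x k ≤ c k * ((m + 1) * u k) :=
            mul_le_mul_of_nonneg_left (hUle k) (hc k)
        _ = (m + 1) * (c k * u k) := by ring
    linarith [t1, t2, t3]
end
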